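/- In a DAG G, if vertex Z lies on a path π between A and B and π is active given a set C with Z a non-collider on π, then Z is an ancestor of A, of B, or of some vertex in C. -/

import Mathlib

variable {V : Type*}

/-- `Ancestor E x y`: there is a (possibly trivial) directed path from `x` to `y`. -/
def Ancestor (E : V → V → Prop) (x y : V) : Prop :=
  Relation.ReflTransGen E x y

/-- A directed graph is acyclic (a DAG) if it has no directed cycles. -/
def Acyclic (E : V → V → Prop) : Prop :=
  ∀ v : V, ¬ Relation.TransGen E v v

/-- `v` is a collider on the path (vertex list) `l`. -/
def ColliderOn (E : V → V → Prop) (l : List V) (v : V) : Prop :=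
  ∃ x y : V, [x, v, y] <:+: l ∧ E x v ∧ E y v

/-- `v` is an interior non-collider on the path `l`. -/
def NonColliderOn (E : V → V → Prop) (l : List V) (v : V) : Prop :=
  (∃ x y : V, [x, v, y] <:+: l) ∧ ¬ ColliderOn E l v

/-- `l` is a path between `a` and `b` that is active given the conditioning set `C`:
every collider on `l` has a descendant in `C` and no non-collider on `l` is in `C`. -/
def ActivePath (E : V → V → Prop) (C : Set V) (a b : V) (l : List V) : Prop :=
  l.head? = some a ∧ l.getLast? = some b ∧ l.Nodup ∧
  l.Chain' (fun u v => E u v ∨ E v u) ∧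
  (∀ v, ColliderOn E l v → ∃ d ∈ C, Ancestor E v d) ∧
  (∀ v, NonColliderOn E l v → v ∉ C)

/-- `a` and `b` are d-connected given `C`. -/
def DConn (E : V → V → Prop) (C : Set V) (a b : V) : Prop :=
  ∃ l : List V, ActivePath E C a b l

/-- `a` and `b` are d-separated given `C`. -/
def DSep (E : V → V → Prop) (C : Set V) (a b : V) : Prop :=
  ¬ DConn E C a b

private lemma chase (E : V → V → Prop) (C : Set V) (B : V) :
    ∀ (s p l : List V) (Z y : V),
      l = p ++ Z :: y :: s →
      l.getLast? = some B →
      l.Chain' (fun u v => E u v ∨ E v u) →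
      (∀ v, ColliderOn E l v → ∃ d ∈ C, Ancestor E v d) →
      E Z y →
      Ancestor E y B ∨ ∃ c ∈ C, Ancestor E y c := by
  intro s
  induction s with
  | nil =>
    intro p l Z y hl hlast _ _ _
    left
    have : l.getLast? = some y := by
      subst hl
      rw [show p ++ [Z, y] = (p ++ [Z]) ++ [y] by simp, List.getLast?_concat]
    rw [this] at hlast
    cases Option.some.inj hlast
    exact Relation.ReflTransGen.refl
  | cons w s' ih =>
    intro p l Z y hl hlast hchain hcoll hZy
    have hinf : [y, w] <:+: l := ⟨p ++ [Z], s', by simp [hl]⟩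
    have hrel : E y w ∨ E w y := by
      have := hchain.infix hinf
      exact (List.isChain_cons_cons.mp this).1
    rcases hrel with hyw | hwy
    · have := ih (p ++ [Z]) l y w (by simp [hl]) hlast hchain hcoll hyw
      rcases this with h | ⟨c, hc, hyc⟩
      · exact Or.inl (Relation.ReflTransGen.head hyw h)
      · exact Or.inr ⟨c, hc, Relation.ReflTransGen.head hyw hyc⟩
    · right
      exact hcoll y ⟨Z, w, ⟨p, s', by simp [hl]⟩, hZy, hwy⟩

private lemma collider_reverse {E : V → V → Prop} {l : List V} {v : V}
    (h : ColliderOn E l.reverse v) : ColliderOn E l v := by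
  obtain ⟨x, y, hinf, hx, hy⟩ := h
  refine ⟨y, x, ?_, hy, hx⟩
  have := List.reverse_infix.mpr hinf
  simpa using this

/-- A non-collider on a path active given `C` is an ancestor of an endpoint or of `C`. -/
theorem stmt_7 (E : V → V → Prop) (hacyc : Acyclic E) (A B Z : V) (C : Set V)
    (l : List V) (hact : ActivePath E C A B l) (hZ : NonColliderOn E l Z) :
    Ancestor E Z A ∨ Ancestor E Z B ∨ ∃ c ∈ C, Ancestor E Z c := by
  obtain ⟨hhead, hlast, _, hchain, hcoll, _⟩ := hact
  obtain ⟨⟨x, y, hinf⟩, hnc⟩ := hZ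
  obtain ⟨p, s, hl⟩ := hinf
  have hl : l = p ++ x :: Z :: y :: s := by simpa using hl.symm
  have hrxZ : E x Z ∨ E Z x := by
    have := hchain.infix (⟨p, y :: s, by simp [hl]⟩ : [x, Z] <:+: l)
    exact (List.isChain_cons_cons.mp this).1
  have hrZy : E Z y ∨ E y Z := by
    have := hchain.infix (⟨p ++ [x], s, by simp [hl]⟩ : [Z, y] <:+: l)
    exact (List.isChain_cons_cons.mp this).1
  have hnot : ¬ (E x Z ∧ E y Z) := fun ⟨h1, h2⟩ =>
    hnc ⟨x, y, ⟨p, s, by simp [hl]⟩, h1, h2⟩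
  rcases hrZy with hZy | hyZ
  · -- go right
    have := chase E C B s (p ++ [x]) l Z y (by simp [hl]) hlast hchain hcoll hZy
    rcases this with h | ⟨c, hc, hyc⟩
    · exact Or.inr (Or.inl (Relation.ReflTransGen.head hZy h))
    · exact Or.inr (Or.inr ⟨c, hc, Relation.ReflTransGen.head hZy hyc⟩)
  · -- edge y → Z; then must have E Z x
    have hZx : E Z x := by
      rcases hrxZ with hxZ | hZx
      · exact absurd ⟨hxZ, hyZ⟩ hnot
      · exact hZx
    -- go left on the reversed list
    have hlrev : l.reverse = (s.reverse ++ [y]) ++ Z :: x :: p.reverse := by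
      simp [hl]
    have hlastrev : l.reverse.getLast? = some A := by
      rw [List.getLast?_reverse]; exact hhead
    have hchainrev : l.reverse.Chain' (fun u v => E u v ∨ E v u) := by
      refine List.isChain_reverse.mpr ?_
      exact hchain.imp (fun a b h => h.symm)
    have hcollrev : ∀ v, ColliderOn E l.reverse v → ∃ d ∈ C, Ancestor E v d :=
      fun v hv => hcoll v (collider_reverse hv)
    have := chase E C A p.reverse (s.reverse ++ [y]) l.reverse Z x hlrev
      hlastrev hchainrev hcollrev hZx
    rcases this with h | ⟨c, hc, hxc⟩
    · exact Or.inl (Relation.ReflTransGen.head hZx h)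
    · exact Or.inr (Or.inr ⟨c, hc, Relation.ReflTransGen.head hZx hxc⟩)
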